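/- Let Γμ: ℝ^N_+ → ℝ^N_+ be monotone and let w ∈ ℝ^N_+ be such that the iterates satisfy lim_{k→∞} Γμ^k(w) = 0. Then the small gain condition holds on the order interval [0, w]: for every s ∈ ℝ^N_+ with s ≤ w and s ≠ 0 it is not the case that Γμ(s) ≥ s. -/

import Mathlib

/-- If `Γμ : ℝ^N_+ → ℝ^N_+` is monotone and the iterates `Γμ^k(w)` converge to
`0`, then the small gain condition holds on the order interval `[0, w]`:
for every `s ∈ ℝ^N_+` with `s ≤ w`, `s ≠ 0`, it is not the case that
`Γμ(s) ≥ s`. -/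
theorem small_gain_on_order_interval
    {N : ℕ}
    (Γμ : EuclideanSpace ℝ (Fin N) → EuclideanSpace ℝ (Fin N))
    (hmaps : ∀ v : EuclideanSpace ℝ (Fin N), (∀ i, 0 ≤ v i) → ∀ i, 0 ≤ Γμ v i)
    (hmono : ∀ v w : EuclideanSpace ℝ (Fin N), (∀ i, 0 ≤ v i) → (∀ i, 0 ≤ w i) →
      (∀ i, v i ≤ w i) → ∀ i, Γμ v i ≤ Γμ w i)
    (w : EuclideanSpace ℝ (Fin N)) (hw : ∀ i, 0 ≤ w i)
    (hlim : Filter.Tendsto (fun k => Γμ^[k] w) Filter.atTop (nhds 0)) :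
    ∀ s : EuclideanSpace ℝ (Fin N), (∀ i, 0 ≤ s i) → (∀ i, s i ≤ w i) →
      s ≠ 0 → ¬ (∀ i, s i ≤ Γμ s i) := by
  intro s hs hsw hne hle
  -- key induction: Γμ^[k] s ≥ 0, s ≤ Γμ^[k] s, Γμ^[k] w ≥ 0, Γμ^[k] s ≤ Γμ^[k] w
  have key : ∀ k : ℕ, (∀ i, 0 ≤ Γμ^[k] s i) ∧ (∀ i, s i ≤ Γμ^[k] s i) ∧
      (∀ i, 0 ≤ Γμ^[k] w i) ∧ (∀ i, Γμ^[k] s i ≤ Γμ^[k] w i) := by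
    intro k
    induction k with
    | zero => exact ⟨hs, fun i => le_refl _, hw, hsw⟩
    | succ k ih =>
      obtain ⟨h1, h2, h3, h4⟩ := ih
      have e1 : Γμ^[k+1] s = Γμ (Γμ^[k] s) := Function.iterate_succ_apply' _ _ _
      have e2 : Γμ^[k+1] w = Γμ (Γμ^[k] w) := Function.iterate_succ_apply' _ _ _
      rw [e1, e2]
      refine ⟨hmaps _ h1, ?_, hmaps _ h3, hmono _ _ h1 h3 h4⟩
      intro i
      calc s i ≤ Γμ s i := hle i
        _ ≤ Γμ (Γμ^[k] s) i := hmono _ _ hs h1 h2 i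
  -- each coordinate of s is ≤ 0
  have hcoord : ∀ i, s i ≤ 0 := by
    intro i
    have htend : Filter.Tendsto (fun k => Γμ^[k] w i) Filter.atTop (nhds 0) := by
      have := ((PiLp.continuous_apply 2 _ i).tendsto (0 : EuclideanSpace ℝ (Fin N))).comp hlim
      exact this
    have hbound : ∀ k, s i ≤ Γμ^[k] w i := fun k =>
      le_trans ((key k).2.1 i) ((key k).2.2.2 i)
    exact ge_of_tendsto htend (Filter.Eventually.of_forall hbound)
  apply hne
  ext i
  exact le_antisymm (hcoord i) (hs i)
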